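/- Let K : ℝ² → ℝ be continuously differentiable and let V := (−∂K/∂x₂, ∂K/∂x₁). Let τ > 0, c > 0, A ∈ ℝ, t₁ < t₂, and let ξ : [t₁, t₂] → ℝ² be continuously differentiable with |∇K(ξ(t))| ≤ τ for every t ∈ [t₁, t₂]. Then ∫_{t₁}^{t₂} [ (1/4)|ξ'(t) − A·V(ξ(t))|² + c ] dt ≥ |K(ξ(t₂)) − K(ξ(t₁))| · √c / τ. -/

import Mathlib

/-- Let `K : ℝ² → ℝ` be `C¹` and `V = (−∂K/∂x₂, ∂K/∂x₁)`.  If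
`ξ : [t₁, t₂] → ℝ²` is `C¹` with derivative `ξ'` and `|∇K(ξ(t))| ≤ τ` on `[t₁, t₂]`,
then for `c > 0`,
`∫_{t₁}^{t₂} [(1/4)|ξ'(t) − A V(ξ(t))|² + c] dt ≥ |K(ξ(t₂)) − K(ξ(t₁))| √c / τ`. -/
theorem statement16 (K : EuclideanSpace ℝ (Fin 2) → ℝ) (hK : ContDiff ℝ 1 K)
    (V : EuclideanSpace ℝ (Fin 2) → EuclideanSpace ℝ (Fin 2))
    (hV : ∀ y, V y 0 = -(gradient K y 1) ∧ V y 1 = gradient K y 0)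
    (τ c A t₁ t₂ : ℝ) (hτ : 0 < τ) (hc : 0 < c) (ht : t₁ < t₂)
    (ξ ξ' : ℝ → EuclideanSpace ℝ (Fin 2))
    (hderiv : ∀ t ∈ Set.Icc t₁ t₂, HasDerivAt ξ (ξ' t) t)
    (hcont : ContinuousOn ξ' (Set.Icc t₁ t₂))
    (hgrad : ∀ t ∈ Set.Icc t₁ t₂, ‖gradient K (ξ t)‖ ≤ τ) :
    (∫ t in t₁..t₂, ((1/4) * ‖ξ' t - A • V (ξ t)‖ ^ 2 + c))
      ≥ |K (ξ t₂) - K (ξ t₁)| * Real.sqrt c / τ := by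
  have hsc : 0 < Real.sqrt c := Real.sqrt_pos.2 hc
  -- continuity of gradient K
  have hgc : Continuous (fun y => gradient K y) := by
    have h1 : Continuous (fderiv ℝ K) := hK.continuous_fderiv one_ne_zero
    have : (fun y => gradient K y) =
        fun y => (InnerProductSpace.toDual ℝ (EuclideanSpace ℝ (Fin 2))).symm (fderiv ℝ K y) :=
      rfl
    rw [this]
    exact (InnerProductSpace.toDual ℝ _).symm.continuous.comp h1
  -- continuity of ξ on Icc
  have hξc : ContinuousOn ξ (Set.Icc t₁ t₂) :=
    fun t htmem => (hderiv t htmem).continuousAt.continuousWithinAt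
  -- continuity of V
  have hVc : Continuous V := by
    have : Continuous (fun y => (EuclideanSpace.equiv (Fin 2) ℝ) (V y)) := by
      apply continuous_pi
      intro i
      fin_cases i
      · simp [(hV _).1]
        exact ((continuous_apply (1 : Fin 2)).comp ((PiLp.continuous_ofLp 2 _).comp hgc)).neg
      · simpa [(hV _).2, Function.comp_def] using ((continuous_apply (0 : Fin 2)).comp ((PiLp.continuous_ofLp 2 _).comp hgc))
    have h2 := ((EuclideanSpace.equiv (Fin 2) ℝ).symm.continuous).comp this
    simpa [Function.comp_def] using h2
  -- the integrand
  set g : ℝ → ℝ := fun t => (1/4) * ‖ξ' t - A • V (ξ t)‖ ^ 2 + c with hg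
  have hgcont : ContinuousOn g (Set.Icc t₁ t₂) := by
    apply ContinuousOn.add _ continuousOn_const
    apply ContinuousOn.mul continuousOn_const
    exact ((hcont.sub (((hVc.comp_continuousOn hξc)).const_smul A)).norm.pow 2)
  have hgint : IntervalIntegrable g MeasureTheory.volume t₁ t₂ :=
    hgcont.intervalIntegrable_of_Icc ht.le
  -- derivative of K ∘ ξ
  set f' : ℝ → ℝ := fun t => inner ℝ (gradient K (ξ t)) (ξ' t) with hf'
  have hKd : ∀ t ∈ Set.Icc t₁ t₂, HasDerivAt (fun t => K (ξ t)) (f' t) t := by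
    intro t htmem
    have h1 : HasGradientAt K (gradient K (ξ t)) (ξ t) :=
      (hK.differentiable one_ne_zero _).hasGradientAt
    have h2 := h1.hasFDerivAt.comp_hasDerivAt t (hderiv t htmem)
    simpa [hf', PiLp.inner_apply, Fin.sum_univ_two, Function.comp_def, RCLike.inner_apply] using h2
  have hf'cont : ContinuousOn f' (Set.Icc t₁ t₂) :=
    (hgc.comp_continuousOn hξc).inner hcont
  have hf'int : IntervalIntegrable f' MeasureTheory.volume t₁ t₂ :=
    hf'cont.intervalIntegrable_of_Icc ht.le
  -- orthogonality: inner (grad K y) (V y) = 0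
  have horth : ∀ y, (inner ℝ (gradient K y) (V y) : ℝ) = 0 := by
    intro y
    rw [PiLp.inner_apply, Fin.sum_univ_two, (hV y).1, (hV y).2]
    simp [mul_comm]
  -- pointwise bound |f' t| ≤ (τ / √c) * g t
  have hptwise : ∀ t ∈ Set.Icc t₁ t₂, |f' t| ≤ (τ / Real.sqrt c) * g t := by
    intro t htmem
    have hiw : f' t = inner ℝ (gradient K (ξ t)) (ξ' t - A • V (ξ t)) := by
      rw [inner_sub_right, inner_smul_right, horth]
      simp [hf']
    have h1 : |f' t| ≤ ‖gradient K (ξ t)‖ * ‖ξ' t - A • V (ξ t)‖ := by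
      rw [hiw]; exact abs_real_inner_le_norm _ _
    have h2 : ‖gradient K (ξ t)‖ * ‖ξ' t - A • V (ξ t)‖ ≤ τ * ‖ξ' t - A • V (ξ t)‖ :=
      mul_le_mul_of_nonneg_right (hgrad t htmem) (norm_nonneg _)
    have hsq : Real.sqrt c * ‖ξ' t - A • V (ξ t)‖ ≤ g t := by
      have h3 : (0:ℝ) ≤ (‖ξ' t - A • V (ξ t)‖ / 2 - Real.sqrt c) ^ 2 := sq_nonneg _
      have h4 : Real.sqrt c ^ 2 = c := Real.sq_sqrt hc.le
      simp only [hg]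
      nlinarith [norm_nonneg (ξ' t - A • V (ξ t))]
    have h5 : τ * ‖ξ' t - A • V (ξ t)‖ ≤ (τ / Real.sqrt c) * g t := by
      rw [div_mul_eq_mul_div, le_div_iff₀ hsc]
      calc τ * ‖ξ' t - A • V (ξ t)‖ * Real.sqrt c
          = τ * (Real.sqrt c * ‖ξ' t - A • V (ξ t)‖) := by ring
        _ ≤ τ * g t := mul_le_mul_of_nonneg_left hsq hτ.le
    linarith
  -- FTC
  have hFTC : ∫ t in t₁..t₂, f' t = K (ξ t₂) - K (ξ t₁) := by
    apply intervalIntegral.integral_eq_sub_of_hasDerivAt _ hf'int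
    intro t htmem
    exact hKd t (by rwa [Set.uIcc_of_le ht.le] at htmem)
  -- integral bound
  have habs : |K (ξ t₂) - K (ξ t₁)| ≤ (τ / Real.sqrt c) * ∫ t in t₁..t₂, g t := by
    rw [← hFTC]
    calc |∫ t in t₁..t₂, f' t| ≤ ∫ t in t₁..t₂, |f' t| :=
          intervalIntegral.abs_integral_le_integral_abs ht.le
      _ ≤ ∫ t in t₁..t₂, (τ / Real.sqrt c) * g t := by
          apply intervalIntegral.integral_mono_on ht.le hf'int.abs
            (hgint.const_mul _)
          exact hptwise
      _ = (τ / Real.sqrt c) * ∫ t in t₁..t₂, g t := by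
          rw [intervalIntegral.integral_const_mul]
  have hI : (0:ℝ) ≤ ∫ t in t₁..t₂, g t := by
    nlinarith [abs_nonneg (K (ξ t₂) - K (ξ t₁)), div_pos hτ hsc]
  rw [ge_iff_le, div_le_iff₀ hτ]
  calc |K (ξ t₂) - K (ξ t₁)| * Real.sqrt c
      ≤ ((τ / Real.sqrt c) * ∫ t in t₁..t₂, g t) * Real.sqrt c :=
        mul_le_mul_of_nonneg_right habs hsc.le
    _ = (∫ t in t₁..t₂, g t) * τ := by field_simp
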